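/- Let n ≥ 3 be odd, let 0 < a_1 ≤ a_2 ≤ … ≤ a_n, and let A_1,…,A_{(n−1)/2} ≥ 0 with at least one A_k ≠ 0. Define the polynomial Q(x) = (x+a_1)(x+a_2)⋯(x+a_n) + Σ_{k=1}^{(n−1)/2} A_k x^{2k}. Then Q has exactly one real root in the open interval (−∞, −a_n), and Q has at most two real roots in the open interval (−a_2, −a_1). -/

import Mathlib

open Finset Set

lemma aux_inv_convex {c : ℝ} {s : Set ℝ} (hs : Convex ℝ s) (h : ∀ x ∈ s, 0 < x + c) :
    ConvexOn ℝ s (fun x => (x + c)⁻¹) := by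
  refine ⟨hs, fun x hx y hy p q hp hq hpq => ?_⟩
  simp only [smul_eq_mul]
  have hq' : q = 1 - p := by linarith
  subst hq'
  have hxp : 0 < x + c := h x hx
  have hyp : 0 < y + c := h y hy
  have hz : 0 < p * x + (1 - p) * y + c := by
    rcases eq_or_lt_of_le hp with h' | h'
    · rw [← h']; linarith
    · nlinarith [mul_pos h' hxp, mul_nonneg hq hyp.le]
  have e : p * (x + c)⁻¹ + (1 - p) * (y + c)⁻¹ - (p * x + (1 - p) * y + c)⁻¹ =
      (p * (1 - p) * (x - y) ^ 2) / ((x + c) * (y + c) * (p * x + (1 - p) * y + c)) := by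
    field_simp
    ring
  have hnn : 0 ≤ (p * (1 - p) * (x - y) ^ 2) /
      ((x + c) * (y + c) * (p * x + (1 - p) * y + c)) := by positivity
  linarith [e ▸ hnn]

lemma aux_smul_strict {c : ℝ} {s : Set ℝ} {f : ℝ → ℝ} (hc : 0 < c)
    (hf : StrictConvexOn ℝ s f) : StrictConvexOn ℝ s (fun x => c * f x) := by
  refine ⟨hf.1, fun x hx y hy hxy p q hp hq hpq => ?_⟩
  have := hf.2 hx hy hxy hp hq hpq
  simp only [smul_eq_mul] at *
  nlinarith

lemma aux_strict_mul {s : Set ℝ} {f g : ℝ → ℝ} (hf : ConvexOn ℝ s f) (hg : ConvexOn ℝ s g)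
    (haf : StrictAntiOn f s) (hag : StrictAntiOn g s)
    (hf0 : ∀ x ∈ s, 0 < f x) (hg0 : ∀ x ∈ s, 0 < g x) :
    StrictConvexOn ℝ s (fun x => f x * g x) := by
  refine ⟨hf.1, fun x hx y hy hxy p q hp hq hpq => ?_⟩
  have hzs : p • x + q • y ∈ s := hf.1 hx hy hp.le hq.le hpq
  have h1 := hf.2 hx hy hp.le hq.le hpq
  have h2 := hg.2 hx hy hp.le hq.le hpq
  simp only [smul_eq_mul] at *
  have hq' : q = 1 - p := by linarith
  subst hq'
  have key : 0 < (f x - f y) * (g x - g y) := by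
    rcases hxy.lt_or_gt with h | h
    · have a1 := haf hx hy h; have a2 := hag hx hy h; nlinarith
    · have a1 := haf hy hx h; have a2 := hag hy hx h; nlinarith
  have hfz := hf0 _ hzs
  have hgz := hg0 _ hzs
  have hfx := hf0 _ hx; have hfy := hf0 _ hy
  have hgx := hg0 _ hx; have hgy := hg0 _ hy
  have step := mul_le_mul h1 h2 hgz.le
    (show (0:ℝ) ≤ p * f x + (1 - p) * f y by nlinarith)
  nlinarith [step, mul_pos (mul_pos hp hq) key]

lemma aux_prod {ι : Type*} (t : Finset ι) {s : Set ℝ} (hs : Convex ℝ s) (f : ι → ℝ → ℝ)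
    (hc : ∀ i ∈ t, ConvexOn ℝ s (f i)) (ha : ∀ i ∈ t, AntitoneOn (f i) s)
    (h0 : ∀ i ∈ t, ∀ x ∈ s, 0 < f i x) :
    ConvexOn ℝ s (fun x => ∏ i ∈ t, f i x) ∧ AntitoneOn (fun x => ∏ i ∈ t, f i x) s ∧
      ∀ x ∈ s, 0 < ∏ i ∈ t, f i x := by
  induction t using Finset.cons_induction with
  | empty => simpa using ⟨convexOn_const 1 hs, fun x _ y _ _ => le_refl 1⟩
  | cons i t hit ih =>
      obtain ⟨ihc, iha, ih0⟩ := ih (fun j hj => hc j (Finset.mem_cons_of_mem hj))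
        (fun j hj => ha j (Finset.mem_cons_of_mem hj))
        (fun j hj => h0 j (Finset.mem_cons_of_mem hj))
      have hmi : i ∈ Finset.cons i t hit := Finset.mem_cons_self i t
      simp only [Finset.prod_cons]
      refine ⟨?_, ?_, fun x hx => mul_pos (h0 i hmi x hx) (ih0 x hx)⟩
      · exact (hc i hmi).mul ihc (fun x hx => (h0 i hmi x hx).le) (fun x hx => (ih0 x hx).le)
          ((ha i hmi).monovaryOn iha)
      · intro x hx y hy hxy
        exact mul_le_mul (ha i hmi hx hy hxy) (iha hx hy hxy) (ih0 y hy).le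
          (h0 i hmi x hx).le

lemma aux_no_three {s : Set ℝ} {f : ℝ → ℝ} (hf : StrictConvexOn ℝ s f)
    {p q r : ℝ} (hp : p ∈ s) (hq : q ∈ s) (hr : r ∈ s) (h1 : p < q) (h2 : q < r)
    (e1 : f p = 0) (e2 : f q = 0) (e3 : f r = 0) : False := by
  have hd : 0 < r - p := by linarith
  have hl1 : 0 < (r - q) / (r - p) := div_pos (by linarith) hd
  have hl2 : 0 < (q - p) / (r - p) := div_pos (by linarith) hd
  have hls : (r - q) / (r - p) + (q - p) / (r - p) = 1 := by
    field_simp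
    ring
  have hcc := hf.2 hp hr (ne_of_lt (lt_trans h1 h2)) hl1 hl2 hls
  simp only [smul_eq_mul] at hcc
  have harg : (r - q) / (r - p) * p + (q - p) / (r - p) * r = q := by
    field_simp
    ring
  rw [harg, e1, e2, e3] at hcc
  simp at hcc

set_option maxHeartbeats 1000000 in
theorem lemma1_odd_Q_roots
    (n : ℕ) (hn : 3 ≤ n) (hodd : Odd n)
    (a : Fin n → ℝ) (hpos : ∀ i, 0 < a i) (hmono : Monotone a)
    (A : ℕ → ℝ) (hA : ∀ k ∈ Finset.Icc 1 ((n - 1) / 2), 0 ≤ A k)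
    (hA' : ∃ k ∈ Finset.Icc 1 ((n - 1) / 2), A k ≠ 0)
    (Q : ℝ → ℝ)
    (hQ : ∀ x, Q x = (∏ i, (x + a i)) +
      ∑ k ∈ Finset.Icc 1 ((n - 1) / 2), A k * x ^ (2 * k)) :
    (∃! x, x ∈ Set.Iio (-(a ⟨n - 1, by omega⟩)) ∧ Q x = 0) ∧
    Set.encard {x ∈ Set.Ioo (-(a ⟨1, by omega⟩)) (-(a ⟨0, by omega⟩)) |
      Q x = 0} ≤ 2 := by
  classical
  obtain ⟨t0, hnt⟩ := hodd
  have hm_eq : n = 2 * ((n - 1) / 2) + 1 := by omega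
  set m := (n - 1) / 2 with hmdef
  set K := Finset.Icc 1 m with hKdef
  have hm1 : 1 ≤ m := by omega
  obtain ⟨k₀, hk₀K, hk₀ne⟩ := hA'
  have hk₀pos : 0 < A k₀ := lt_of_le_of_ne (hA k₀ hk₀K) (Ne.symm hk₀ne)
  have h0n : 0 < n := by omega
  have h1n : 1 < n := by omega
  set i0 : Fin n := ⟨0, h0n⟩ with hi0
  set i1 : Fin n := ⟨1, h1n⟩ with hi1
  set iN : Fin n := ⟨n - 1, by omega⟩ with hiN
  have haN : ∀ i : Fin n, a i ≤ a iN := fun i =>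
    hmono (by rw [Fin.le_def]; show i.val ≤ n - 1; have := i.isLt; omega)
  have haNpos : 0 < a iN := hpos iN
  have h2kn : ∀ k ∈ K, 2 * k ≤ n - 1 := by
    intro k hk
    obtain ⟨_, hk2⟩ := Finset.mem_Icc.mp hk
    omega
  have hQcont : Continuous Q := by
    have hfe : Q = fun x => (∏ i, (x + a i)) + ∑ k ∈ K, A k * x ^ (2 * k) := funext hQ
    rw [hfe]
    exact (continuous_finset_prod _ fun i _ => continuous_id.add continuous_const).add
      (continuous_finset_sum _ fun k _ => continuous_const.mul (continuous_pow _))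
  -- rewrite Q at negated arguments
  have key_neg : ∀ u : ℝ, (∏ i, (-u + a i)) = - ∏ i, (u - a i) := by
    intro u
    calc (∏ i, (-u + a i)) = ∏ i : Fin n, (-1) * (u - a i) :=
          Finset.prod_congr rfl fun i _ => by ring
    _ = (-1) ^ n * ∏ i, (u - a i) := by
          rw [Finset.prod_mul_distrib, Finset.prod_const]
          simp
    _ = - ∏ i, (u - a i) := by rw [Odd.neg_one_pow ⟨t0, hnt⟩]; ring
  have root_iff : ∀ u : ℝ, Q (-u) = - (∏ i, (u - a i)) + ∑ k ∈ K, A k * u ^ (2 * k) := by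
    intro u
    rw [hQ, key_neg]
    congr 1
    exact Finset.sum_congr rfl fun k _ => by rw [Even.neg_pow (even_two_mul k)]
  ---------------------------------------------------------------- Part 1
  set C := ∑ k ∈ K, A k with hCdef
  have hC0 : 0 ≤ C := Finset.sum_nonneg hA
  have h2p : (1:ℝ) ≤ 2 ^ n := by
    have := pow_le_pow_left₀ (by norm_num : (0:ℝ) ≤ 1) (by norm_num : (1:ℝ) ≤ 2) n
    simpa using this
  have h3 : 0 < (2:ℝ) ^ n * (C + 1) := by positivity
  set T := 2 * a iN + 2 ^ n * (C + 1) with hTdef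
  have hT1 : 1 ≤ T := by nlinarith
  have hTgt : a iN < T := by nlinarith
  have hfac : ∀ i : Fin n, T / 2 ≤ T - a i := by
    intro i
    have := haN i
    have h4 : 0 < (2:ℝ) ^ n * (C + 1) := h3
    simp only [hTdef]
    linarith
  have hprod_low : (T / 2) ^ n ≤ ∏ i, (T - a i) := by
    calc (T / 2) ^ n = ∏ _i : Fin n, (T / 2) := by
          rw [Finset.prod_const]; simp
    _ ≤ ∏ i, (T - a i) :=
          Finset.prod_le_prod (fun i _ => by linarith) (fun i _ => hfac i)
  have hsum_up : ∑ k ∈ K, A k * T ^ (2 * k) ≤ C * T ^ (n - 1) := by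
    calc ∑ k ∈ K, A k * T ^ (2 * k) ≤ ∑ k ∈ K, A k * T ^ (n - 1) :=
          Finset.sum_le_sum fun k hk =>
            mul_le_mul_of_nonneg_left (pow_le_pow_right₀ hT1 (h2kn k hk)) (hA k hk)
    _ = C * T ^ (n - 1) := (Finset.sum_mul K A (T ^ (n - 1))).symm
  have hQT : Q (-T) < 0 := by
    rw [root_iff T]
    have hTn : (T / 2) ^ n = (T ^ (n - 1) * T) / 2 ^ n := by
      rw [div_pow]
      congr 1
      rw [← pow_succ]
      congr 1
      omega
    have h5 : C * T ^ (n - 1) < (T / 2) ^ n := by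
      rw [hTn, lt_div_iff₀ (by positivity)]
      have h6 : C * 2 ^ n < T := by nlinarith
      calc C * T ^ (n - 1) * 2 ^ n = (C * 2 ^ n) * T ^ (n - 1) := by ring
      _ < T * T ^ (n - 1) := mul_lt_mul_of_pos_right h6 (by positivity)
      _ = T ^ (n - 1) * T := by ring
    linarith
  have hQaN : 0 < Q (-(a iN)) := by
    rw [root_iff (a iN)]
    have hzero : ∏ i, (a iN - a i) = 0 :=
      Finset.prod_eq_zero (Finset.mem_univ iN) (by ring)
    rw [hzero, neg_zero, zero_add]
    refine Finset.sum_pos' (fun k hk => mul_nonneg (hA k hk) (pow_nonneg haNpos.le _))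
      ⟨k₀, hk₀K, mul_pos hk₀pos (pow_pos haNpos _)⟩
  have hTle : -T ≤ -(a iN) := by linarith
  obtain ⟨ξ, hξI, hξQ⟩ := intermediate_value_Ioo hTle hQcont.continuousOn
    (show (0:ℝ) ∈ Set.Ioo (Q (-T)) (Q (-(a iN))) from ⟨hQT, hQaN⟩)
  have huniq : ∀ x y : ℝ, x < y → y < -(a iN) → Q x = 0 → Q y = 0 → False := by
    intro x y hxy hy hQx hQy
    haveI : Nonempty (Fin n) := ⟨iN⟩
    have hv : a iN < -y := by linarith
    have hvpos : 0 < -y := lt_trans haNpos hv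
    have hfv : ∀ i, 0 < -y - a i := fun i => by linarith [haN i]
    have hfu : ∀ i, 0 < -x - a i := fun i => by linarith [haN i]
    have hPv : 0 < ∏ i, (-y - a i) := Finset.prod_pos fun i _ => hfv i
    have hPu : 0 < ∏ i, (-x - a i) := Finset.prod_pos fun i _ => hfu i
    have ex : ∑ k ∈ K, A k * (-x) ^ (2 * k) = ∏ i, (-x - a i) := by
      have h := root_iff (-x)
      rw [neg_neg, hQx] at h
      have : ∀ i : Fin n, (-x) - a i = -x - a i := fun i => rfl
      linarith [h]
    have ey : ∑ k ∈ K, A k * (-y) ^ (2 * k) = ∏ i, (-y - a i) := by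
      have h := root_iff (-y)
      rw [neg_neg, hQy] at h
      linarith [h]
    have key : ∀ k ∈ K, (-x) ^ (2 * k) * ∏ i, (-y - a i) <
        (-y) ^ (2 * k) * ∏ i, (-x - a i) := by
      intro k hk
      have h2k : 2 * k ≤ n := le_trans (h2kn k hk) (by omega)
      have hone : 1 < (-x) / (-y) := by
        rw [lt_div_iff₀ hvpos]; linarith
      have hratio : ((-x) / (-y)) ^ n < (∏ i, (-x - a i)) / (∏ i, (-y - a i)) := by
        have hmain := Finset.prod_lt_prod_of_nonempty
          (s := Finset.univ) (f := fun _ : Fin n => (-x) / (-y))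
          (g := fun i : Fin n => (-x - a i) / (-y - a i))
          (fun i _ => by positivity)
          (fun i _ => by
            rw [div_lt_div_iff₀ hvpos (hfv i)]
            nlinarith [mul_lt_mul_of_pos_right hxy (hpos i)])
          Finset.univ_nonempty
        rw [Finset.prod_const, Finset.prod_div_distrib] at hmain
        simpa using hmain
      have hstep : ((-x) / (-y)) ^ (2 * k) ≤ ((-x) / (-y)) ^ n :=
        pow_le_pow_right₀ hone.le h2k
      have hlt := lt_of_le_of_lt hstep hratio
      rw [div_pow, div_lt_div_iff₀ (by positivity) hPv] at hlt
      linarith [hlt]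
    have hlt2 : ∑ k ∈ K, A k * ((-x) ^ (2 * k) * ∏ i, (-y - a i)) <
        ∑ k ∈ K, A k * ((-y) ^ (2 * k) * ∏ i, (-x - a i)) :=
      Finset.sum_lt_sum (fun k hk => mul_le_mul_of_nonneg_left (key k hk).le (hA k hk))
        ⟨k₀, hk₀K, (mul_lt_mul_iff_right₀ hk₀pos).mpr (key k₀ hk₀K)⟩
    have e1 : ∑ k ∈ K, A k * ((-x) ^ (2 * k) * ∏ i, (-y - a i)) =
        (∏ i, (-x - a i)) * (∏ i, (-y - a i)) := by
      rw [← ex, Finset.sum_mul]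
      exact Finset.sum_congr rfl fun k _ => by ring
    have e2 : ∑ k ∈ K, A k * ((-y) ^ (2 * k) * ∏ i, (-x - a i)) =
        (∏ i, (-y - a i)) * (∏ i, (-x - a i)) := by
      rw [← ey, Finset.sum_mul]
      exact Finset.sum_congr rfl fun k _ => by ring
    rw [e1, e2, mul_comm] at hlt2
    exact lt_irrefl _ hlt2
  constructor
  · refine ⟨ξ, ⟨hξI.2, hξQ⟩, ?_⟩
    rintro y ⟨hy, hQy⟩
    by_contra hne
    rcases lt_or_gt_of_ne hne with h | h
    · exact huniq y ξ h hξI.2 hQy hξQ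
    · exact huniq ξ y h hy hξQ hQy
  ---------------------------------------------------------------- Part 2
  · set s2 : Set ℝ := Set.Ioo (-(a i1)) (-(a i0)) with hs2def
    have hs2 : Convex ℝ s2 := convex_Ioo _ _
    have hx_neg : ∀ x ∈ s2, x < 0 ∧ (∀ i : Fin n, i ≠ i0 → 0 < x + a i) := by
      intro x hx
      obtain ⟨hx1, hx2⟩ := hx
      refine ⟨by linarith [hpos i0], fun i hi => ?_⟩
      have hle : a i1 ≤ a i := by
        apply hmono
        rw [Fin.le_def]
        have hne : i.val ≠ 0 := fun h => hi (Fin.ext (by simp [hi0, h]))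
        simp [hi1]
        omega
      linarith
    set E := Finset.univ.erase i0 with hEdef
    have hEne : E.Nonempty := ⟨i1, Finset.mem_erase.mpr ⟨by simp [hi0, hi1, Fin.ext_iff],
      Finset.mem_univ _⟩⟩
    set D := fun x : ℝ => ∏ i ∈ E, (x + a i) with hDdef
    set g := fun x : ℝ => ∏ i ∈ E, (x + a i)⁻¹ with hgdef
    have hDg : ∀ x : ℝ, g x = (D x)⁻¹ := fun x => by
      simp only [hgdef, hDdef]
      exact Finset.prod_inv_distrib (f := fun i => x + a i)
    have hfpos : ∀ x ∈ s2, ∀ i ∈ E, 0 < x + a i := fun x hx i hi =>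
      (hx_neg x hx).2 i (Finset.mem_erase.mp hi).1
    have hDpos : ∀ x ∈ s2, 0 < D x := fun x hx => Finset.prod_pos (hfpos x hx)
    obtain ⟨hgconv, hganti, hgpos⟩ := aux_prod E hs2 (fun i => fun x => (x + a i)⁻¹)
      (fun i hi => aux_inv_convex hs2 (fun x hx => hfpos x hx i hi))
      (fun i hi x hx y hy hxy => by
        have px := hfpos x hx i hi
        have py := hfpos y hy i hi
        rw [inv_le_inv₀ py px]
        linarith)
      (fun i hi x hx => inv_pos.mpr (hfpos x hx i hi))
    have hgstrict : StrictAntiOn g s2 := by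
      intro x hx y hy hxy
      refine Finset.prod_lt_prod_of_nonempty
        (fun i hi => inv_pos.mpr (hfpos y hy i hi))
        (fun i hi => by
          rw [inv_lt_inv₀ (hfpos y hy i hi) (hfpos x hx i hi)]
          linarith) hEne
    have hpowfacts : ∀ k ∈ K, ConvexOn ℝ s2 (fun x : ℝ => x ^ (2 * k)) ∧
        StrictAntiOn (fun x : ℝ => x ^ (2 * k)) s2 ∧ ∀ x ∈ s2, 0 < x ^ (2 * k) := by
      intro k hk
      obtain ⟨hk1, _⟩ := Finset.mem_Icc.mp hk
      refine ⟨(Even.convexOn_pow (even_two_mul k)).subset (Set.subset_univ _) hs2, ?_, ?_⟩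
      · intro x hx y hy hxy
        have hy0 : y < 0 := (hx_neg y hy).1
        have hx0 : x < 0 := (hx_neg x hx).1
        calc y ^ (2 * k) = (-y) ^ (2 * k) := (Even.neg_pow (even_two_mul k) y).symm
        _ < (-x) ^ (2 * k) := pow_lt_pow_left₀ (by linarith) (by linarith) (by omega)
        _ = x ^ (2 * k) := Even.neg_pow (even_two_mul k) x
      · intro x hx
        have hx0 : x < 0 := (hx_neg x hx).1
        have hsq : 0 < x ^ 2 := by
          rw [pow_two]
          exact mul_pos_of_neg_of_neg hx0 hx0
        rw [pow_mul]
        exact pow_pos hsq k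
    have hψ : ∀ k ∈ K, StrictConvexOn ℝ s2 (fun x => x ^ (2 * k) * g x) := fun k hk =>
      aux_strict_mul (hpowfacts k hk).1 hgconv (hpowfacts k hk).2.1 hgstrict
        (hpowfacts k hk).2.2 hgpos
    set G := fun x : ℝ => (x + a i0) + ∑ k ∈ K, A k * (x ^ (2 * k) * g x) with hGdef
    have haff : ConvexOn ℝ s2 (fun x : ℝ => x + a i0) := by
      refine ⟨hs2, fun x hx y hy p q hp hq hpq => ?_⟩
      simp only [smul_eq_mul]
      have hq' : q = 1 - p := by linarith
      subst hq'
      apply le_of_eq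
      ring
    have hsum : StrictConvexOn ℝ s2 (fun x => ∑ k ∈ K, A k * (x ^ (2 * k) * g x)) := by
      have hrw : (fun x => ∑ k ∈ K, A k * (x ^ (2 * k) * g x)) =
          fun x => A k₀ * (x ^ (2 * k₀) * g x) +
            ∑ k ∈ K.erase k₀, A k * (x ^ (2 * k) * g x) :=
        funext fun x => (Finset.add_sum_erase K _ hk₀K).symm
      rw [hrw]
      have hrest : ConvexOn ℝ s2 (fun x => ∑ k ∈ K.erase k₀, A k * (x ^ (2 * k) * g x)) := by
        have hind := Finset.sum_induction (s := K.erase k₀)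
          (fun k => (fun x : ℝ => A k * (x ^ (2 * k) * g x)))
          (fun f => ConvexOn ℝ s2 f)
          (fun f₁ f₂ hf₁ hf₂ => hf₁.add hf₂)
          (convexOn_const (0:ℝ) hs2)
          (fun k hk => by
            have hk' : k ∈ K := Finset.mem_of_mem_erase hk
            have hc := ((hψ k hk').convexOn).smul (hA k hk')
            simpa [smul_eq_mul] using hc)
        have heq : (fun x => ∑ k ∈ K.erase k₀, A k * (x ^ (2 * k) * g x)) =
            ∑ k ∈ K.erase k₀, (fun x : ℝ => A k * (x ^ (2 * k) * g x)) := by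
          funext x
          simp [Finset.sum_apply]
        rw [heq]
        exact hind
      exact (aux_smul_strict hk₀pos (hψ k₀ hk₀K)).add_convexOn hrest
    have hGconv : StrictConvexOn ℝ s2 G := haff.add_strictConvexOn hsum
    have hQD : ∀ x ∈ s2, Q x = D x * G x := by
      intro x hx
      have hD0 : D x ≠ 0 := ne_of_gt (hDpos x hx)
      rw [hQ]
      have hsplit : ∏ i, (x + a i) = (x + a i0) * D x :=
        (Finset.mul_prod_erase Finset.univ _ (Finset.mem_univ i0)).symm
      simp only [hGdef]
      rw [hsplit, mul_add, Finset.mul_sum]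
      have h1 : ∀ k ∈ K, D x * (A k * (x ^ (2 * k) * g x)) = A k * x ^ (2 * k) := by
        intro k hk
        rw [hDg x]
        field_simp
      rw [Finset.sum_congr rfl h1]
      ring
    have hG0 : ∀ x ∈ s2, Q x = 0 → G x = 0 := by
      intro x hx h
      have h2 := hQD x hx
      rw [h] at h2
      exact ((mul_eq_zero.mp h2.symm).resolve_left (ne_of_gt (hDpos x hx)))
    have key3 : ∀ p q r : ℝ, p ∈ s2 → q ∈ s2 → r ∈ s2 → p < q → q < r →
        Q p = 0 → Q q = 0 → Q r = 0 → False := by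
      intro p q r hp hq hr hpq hqr hQp hQq hQr
      exact aux_no_three hGconv hp hq hr hpq hqr (hG0 p hp hQp) (hG0 q hq hQq)
        (hG0 r hr hQr)
    by_contra hcon
    push_neg at hcon
    have h3' : (3:ℕ∞) ≤ Set.encard {x ∈ Set.Ioo (-(a i1)) (-(a i0)) | Q x = 0} := by
      have h := Order.add_one_le_of_lt hcon
      exact le_trans (by norm_num : (3:ℕ∞) ≤ 2 + 1) h
    obtain ⟨Tset, hTsub, hT3⟩ := Set.exists_subset_encard_eq h3'
    rw [Set.encard_eq_three] at hT3
    obtain ⟨x, y, z, hxy, hxz, hyz, rfl⟩ := hT3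
    obtain ⟨hxs, hxq⟩ := hTsub (show x ∈ ({x, y, z} : Set ℝ) by simp)
    obtain ⟨hys, hyq⟩ := hTsub (show y ∈ ({x, y, z} : Set ℝ) by simp)
    obtain ⟨hzs, hzq⟩ := hTsub (show z ∈ ({x, y, z} : Set ℝ) by simp)
    rcases lt_trichotomy x y with h1 | h1 | h1
    · rcases lt_trichotomy y z with h2 | h2 | h2
      · exact key3 x y z hxs hys hzs h1 h2 hxq hyq hzq
      · exact hyz h2
      · rcases lt_trichotomy x z with h4 | h4 | h4
        · exact key3 x z y hxs hzs hys h4 h2 hxq hzq hyq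
        · exact hxz h4
        · exact key3 z x y hzs hxs hys h4 h1 hzq hxq hyq
    · exact hxy h1
    · rcases lt_trichotomy x z with h2 | h2 | h2
      · exact key3 y x z hys hxs hzs h1 h2 hyq hxq hzq
      · exact hxz h2
      · rcases lt_trichotomy y z with h4 | h4 | h4
        · exact key3 y z x hys hzs hxs h4 h2 hyq hzq hxq
        · exact hyz h4
        · exact key3 z y x hzs hys hxs h4 h1 hzq hyq hxq
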